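/- Let n₁,...,n_k ≥ 2 be integers with k > 1. Consider the single-vertex k-graph Λ(n₁,...,n_k) with nᵢ loops a₀^{(nᵢ)},...,a_{nᵢ−1}^{(nᵢ)} of color i and commutation relations a_m^{(nᵢ)} a_l^{(nⱼ)} = a_{m'}^{(nⱼ)} a_{l'}^{(nᵢ)} iff m/nᵢ + l/(nᵢnⱼ) = m'/(nᵢnⱼ) + l'/nⱼ... Then the map φ₀ on finite paths sending a word (a_{l₁}^{(n_{i₁})},...,a_{l_m}^{(n_{i_m})}) to Σ_{j=1}^m l_j · Π_{s=1}^{j} (1/n_{i_s}) is well-defined on equivalence classes of words (respects the commutation relations) and is injective. -/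

import Mathlib

/-- The value `φ₀` of a word in the letters `a_l^{(n_i)}` (a letter is a pair `(i, l)` of a
color `i` and an index `l < nᵢ`): the word `(a_{l₁}^{(n_{i₁})},…,a_{l_m}^{(n_{i_m})})` is
sent to `Σ_{j=1}^m l_j · Π_{s=1}^j (1/n_{i_s})`. -/
def kgraphPhi0 {k : ℕ} (n : Fin k → ℕ) : List (Fin k × ℕ) → ℚ
  | [] => 0
  | p :: w => (p.2 : ℚ) / (n p.1 : ℚ) + ((n p.1 : ℚ))⁻¹ * kgraphPhi0 n w

/-- A word is valid if every letter `(i, l)` satisfies `l < nᵢ`. -/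
def kgraphValid {k : ℕ} (n : Fin k → ℕ) (w : List (Fin k × ℕ)) : Prop :=
  ∀ p ∈ w, p.2 < n p.1

/-- One elementary application of a commutation relation:
`a_m^{(nᵢ)} a_l^{(nⱼ)} ~ a_{m'}^{(nⱼ)} a_{l'}^{(nᵢ)}` (for `i ≠ j`) whenever
`m/nᵢ + l/(nᵢnⱼ) = m'/nⱼ + l'/(nᵢnⱼ)`. -/
def kgraphStep {k : ℕ} (n : Fin k → ℕ) (w w' : List (Fin k × ℕ)) : Prop :=
  ∃ (w₁ w₂ : List (Fin k × ℕ)) (i j : Fin k) (m l m' l' : ℕ),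
    i ≠ j ∧ m < n i ∧ l < n j ∧ m' < n j ∧ l' < n i ∧
    (m : ℚ) / (n i : ℚ) + (l : ℚ) / ((n i : ℚ) * (n j : ℚ)) =
      (m' : ℚ) / (n j : ℚ) + (l' : ℚ) / ((n i : ℚ) * (n j : ℚ)) ∧
    w = w₁ ++ [(i, m), (j, l)] ++ w₂ ∧ w' = w₁ ++ [(j, m'), (i, l')] ++ w₂

lemma kgraphPhi0_cons {k : ℕ} (n : Fin k → ℕ) (p : Fin k × ℕ) (w : List (Fin k × ℕ)) :
    kgraphPhi0 n (p :: w) = (p.2 : ℚ) / (n p.1 : ℚ) + ((n p.1 : ℚ))⁻¹ * kgraphPhi0 n w := rfl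

lemma kgraphPhi0_append {k : ℕ} (n : Fin k → ℕ) (u v : List (Fin k × ℕ)) :
    kgraphPhi0 n (u ++ v) =
      kgraphPhi0 n u + (u.map fun p => ((n p.1 : ℚ))⁻¹).prod * kgraphPhi0 n v := by
  induction u with
  | nil => simp [kgraphPhi0]
  | cons p t ih =>
    simp only [List.cons_append, kgraphPhi0_cons, ih, List.map_cons, List.prod_cons]
    ring

lemma kgraphStep_phi0 {k : ℕ} (n : Fin k → ℕ) (hn : ∀ i, 2 ≤ n i)
    {w w' : List (Fin k × ℕ)} (h : kgraphStep n w w') :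
    kgraphPhi0 n w = kgraphPhi0 n w' := by
  obtain ⟨w₁, w₂, i, j, m, l, m', l', hij, hm, hl, hm', hl', heq, rfl, rfl⟩ := h
  have hi : (n i : ℚ) ≠ 0 := Nat.cast_ne_zero.mpr (by have := hn i; omega)
  have hj : (n j : ℚ) ≠ 0 := Nat.cast_ne_zero.mpr (by have := hn j; omega)
  have inner : kgraphPhi0 n ([(i, m), (j, l)] ++ w₂) = kgraphPhi0 n ([(j, m'), (i, l')] ++ w₂) := by
    simp only [List.cons_append, List.nil_append, kgraphPhi0_cons]
    field_simp at heq ⊢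
    linear_combination heq
  simp only [List.append_assoc, kgraphPhi0_append, inner]

lemma kgraphEqv_phi0 {k : ℕ} (n : Fin k → ℕ) (hn : ∀ i, 2 ≤ n i)
    {w w' : List (Fin k × ℕ)} (h : Relation.EqvGen (kgraphStep n) w w') :
    kgraphPhi0 n w = kgraphPhi0 n w' := by
  induction h with
  | rel _ _ h => exact kgraphStep_phi0 n hn h
  | refl => rfl
  | symm _ _ _ ih => exact ih.symm
  | trans _ _ _ _ _ ih1 ih2 => exact ih1.trans ih2

lemma kgraphPhi0_nonneg {k : ℕ} (n : Fin k → ℕ) (w : List (Fin k × ℕ)) :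
    0 ≤ kgraphPhi0 n w := by
  induction w with
  | nil => simp [kgraphPhi0]
  | cons p t ih =>
    rw [kgraphPhi0_cons]
    have h1 : (0:ℚ) ≤ (p.2 : ℚ) / (n p.1 : ℚ) := by positivity
    have h2 : (0:ℚ) ≤ ((n p.1 : ℚ))⁻¹ := by positivity
    nlinarith

lemma kgraphPhi0_cons' {k : ℕ} (n : Fin k → ℕ) (hn : ∀ i, 2 ≤ n i)
    (p : Fin k × ℕ) (w : List (Fin k × ℕ)) :
    kgraphPhi0 n (p :: w) = ((p.2 : ℚ) + kgraphPhi0 n w) / (n p.1 : ℚ) := by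
  have h : (n p.1 : ℚ) ≠ 0 := Nat.cast_ne_zero.mpr (by have := hn p.1; omega)
  rw [kgraphPhi0_cons]
  field_simp

lemma kgraphPhi0_lt_one {k : ℕ} (n : Fin k → ℕ) (hn : ∀ i, 2 ≤ n i)
    {w : List (Fin k × ℕ)} (hw : kgraphValid n w) : kgraphPhi0 n w < 1 := by
  induction w with
  | nil => norm_num [kgraphPhi0]
  | cons p t ih =>
    have hp : p.2 < n p.1 := hw p (by simp)
    have ht : kgraphPhi0 n t < 1 := ih (fun q hq => hw q (by simp [hq]))
    have hpos : (0:ℚ) < (n p.1 : ℚ) := by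
      have := hn p.1
      exact_mod_cast Nat.cast_pos.mpr (by omega)
    rw [kgraphPhi0_cons' n hn, div_lt_one hpos]
    have h1 : (p.2:ℚ) + 1 ≤ (n p.1 : ℚ) := by exact_mod_cast hp
    linarith

/-- A single step can be performed after a common prefix letter. -/
lemma kgraphStep_cons {k : ℕ} {n : Fin k → ℕ} (p : Fin k × ℕ)
    {w w' : List (Fin k × ℕ)} (h : kgraphStep n w w') : kgraphStep n (p :: w) (p :: w') := by
  obtain ⟨w₁, w₂, i, j, m, l, m', l', h1, h2, h3, h4, h5, h6, rfl, rfl⟩ := h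
  exact ⟨p :: w₁, w₂, i, j, m, l, m', l', h1, h2, h3, h4, h5, h6, rfl, rfl⟩

lemma kgraphEqv_cons {k : ℕ} {n : Fin k → ℕ} (p : Fin k × ℕ)
    {w w' : List (Fin k × ℕ)} (h : Relation.EqvGen (kgraphStep n) w w') :
    Relation.EqvGen (kgraphStep n) (p :: w) (p :: w') := by
  induction h with
  | rel _ _ h => exact Relation.EqvGen.rel _ _ (kgraphStep_cons p h)
  | refl => exact Relation.EqvGen.refl _
  | symm _ _ _ ih => exact ih.symm _ _
  | trans _ _ _ _ _ ih1 ih2 => exact ih1.trans _ _ _ ih2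

/-- An adjacent pair of distinctly-colored letters can always be commuted. -/
lemma kgraph_swap_exists {k : ℕ} (n : Fin k → ℕ) (hn : ∀ i, 2 ≤ n i)
    {i j : Fin k} (hij : i ≠ j) {m l : ℕ} (hm : m < n i) (hl : l < n j) :
    ∃ m' l' : ℕ, m' < n j ∧ l' < n i ∧
      (m : ℚ) / (n i : ℚ) + (l : ℚ) / ((n i : ℚ) * (n j : ℚ)) =
        (m' : ℚ) / (n j : ℚ) + (l' : ℚ) / ((n i : ℚ) * (n j : ℚ)) := by
  have hi : (n i : ℚ) ≠ 0 := Nat.cast_ne_zero.mpr (by have := hn i; omega)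
  have hj : (n j : ℚ) ≠ 0 := Nat.cast_ne_zero.mpr (by have := hn j; omega)
  refine ⟨(m * n j + l) / n i, (m * n j + l) % n i, ?_, ?_, ?_⟩
  · have : m * n j + l < n i * n j := by
      calc m * n j + l < m * n j + n j := by omega
        _ = (m + 1) * n j := by ring
        _ ≤ n i * n j := Nat.mul_le_mul_right _ (by omega)
    exact Nat.div_lt_of_lt_mul (by omega)
  · exact Nat.mod_lt _ (by have := hn i; omega)
  · have hnat : n i * ((m * n j + l) / n i) + (m * n j + l) % n i = m * n j + l :=
      Nat.div_add_mod _ _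
    have key : (n i : ℚ) * (((m * n j + l) / n i : ℕ) : ℚ) + (((m * n j + l) % n i : ℕ) : ℚ)
        = (m : ℚ) * (n j : ℚ) + l := by exact_mod_cast hnat
    field_simp
    first
    | linear_combination -key
    | linear_combination key
    | linear_combination (n j : ℚ) * key
    | linear_combination (n i : ℚ) * key
    | linear_combination ((n i : ℚ) * (n j : ℚ)) * key
    | linear_combination ((n i : ℚ) ^ 2 * (n j : ℚ)) * key
    | linear_combination ((n i : ℚ) * (n j : ℚ) ^ 2) * key
    | linear_combination (-((n i : ℚ) ^ 2 * (n j : ℚ) ^ 2)) * key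

/-- Words with the same color sequence and the same `φ₀`-value are equal. -/
lemma kgraph_eq_of_same_colors {k : ℕ} (n : Fin k → ℕ) (hn : ∀ i, 2 ≤ n i) :
    ∀ w w' : List (Fin k × ℕ), kgraphValid n w → kgraphValid n w' →
      w.map Prod.fst = w'.map Prod.fst → kgraphPhi0 n w = kgraphPhi0 n w' → w = w' := by
  intro w
  induction w with
  | nil => intro w' _ _ hc _; simpa using (List.map_eq_nil_iff.mp hc.symm)
  | cons p t ih =>
    intro w' hw hw' hc hphi
    cases w' with
    | nil => simp at hc
    | cons q t' =>
      simp only [List.map_cons, List.cons.injEq] at hc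
      obtain ⟨hfst, htail⟩ := hc
      have hpos : (0:ℚ) < (n p.1 : ℚ) := by
        have := hn p.1
        exact Nat.cast_pos.mpr (by omega)
      rw [kgraphPhi0_cons' n hn, kgraphPhi0_cons' n hn, hfst] at hphi
      have hposq : (0:ℚ) < (n q.1 : ℚ) := hfst ▸ hpos
      have hsum : (p.2 : ℚ) + kgraphPhi0 n t = (q.2 : ℚ) + kgraphPhi0 n t' := by
        rw [div_eq_div_iff (ne_of_gt hposq) (ne_of_gt hposq)] at hphi
        exact mul_right_cancel₀ (ne_of_gt hposq) hphi
      have h0t : 0 ≤ kgraphPhi0 n t := kgraphPhi0_nonneg n t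
      have h0t' : 0 ≤ kgraphPhi0 n t' := kgraphPhi0_nonneg n t'
      have h1t : kgraphPhi0 n t < 1 := kgraphPhi0_lt_one n hn (fun r hr => hw r (by simp [hr]))
      have h1t' : kgraphPhi0 n t' < 1 := kgraphPhi0_lt_one n hn (fun r hr => hw' r (by simp [hr]))
      have hlt1 : (p.2 : ℚ) < (q.2 : ℚ) + 1 := by linarith
      have hlt2 : (q.2 : ℚ) < (p.2 : ℚ) + 1 := by linarith
      have hp2 : p.2 = q.2 := by
        have a1 : p.2 < q.2 + 1 := by exact_mod_cast hlt1
        have a2 : q.2 < p.2 + 1 := by exact_mod_cast hlt2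
        omega
      have hteq : t = t' := by
        apply ih t' (fun r hr => hw r (by simp [hr])) (fun r hr => hw' r (by simp [hr])) htail
        have : kgraphPhi0 n t = kgraphPhi0 n t' := by
          rw [hp2] at hsum; linarith
        exact this
      have : p = q := Prod.ext hfst (by exact_mod_cast hp2)
      rw [this, hteq]

/-- Any word can be rearranged, via commutation relations, to realize any permutation of its
color sequence. -/
lemma kgraph_rearrange {k : ℕ} (n : Fin k → ℕ) (hn : ∀ i, 2 ≤ n i)
    {c₁ c₂ : List (Fin k)} (h : c₁.Perm c₂) :
    ∀ w : List (Fin k × ℕ), kgraphValid n w → w.map Prod.fst = c₂ →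
      ∃ w', kgraphValid n w' ∧ w'.map Prod.fst = c₁ ∧
        Relation.EqvGen (kgraphStep n) w w' := by
  induction h with
  | nil =>
    intro w hw hc
    exact ⟨w, hw, hc, Relation.EqvGen.refl _⟩
  | cons a h ih =>
    intro w hw hc
    cases w with
    | nil => simp at hc
    | cons p t =>
      simp only [List.map_cons, List.cons.injEq] at hc
      obtain ⟨hpa, htc⟩ := hc
      obtain ⟨t', ht'v, ht'c, ht'e⟩ := ih t (fun r hr => hw r (by simp [hr])) htc
      refine ⟨p :: t', ?_, by simp [hpa, ht'c], kgraphEqv_cons p ht'e⟩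
      intro r hr
      rcases List.mem_cons.mp hr with h | h
      · exact h ▸ hw p (by simp)
      · exact ht'v r h
  | swap x y l =>
    intro w hw hc
    match w with
    | p :: q :: t =>
      simp only [List.map_cons, List.cons.injEq] at hc
      obtain ⟨h1, h2, h3⟩ := hc
      by_cases hxy : p.1 = q.1
      · refine ⟨p :: q :: t, hw, ?_, Relation.EqvGen.refl _⟩
        have hxyeq : x = y := by rw [← h1, ← h2]; exact hxy
        simp [h1, h2, h3, hxyeq]
      · have hm₁ : p.2 < n p.1 := hw p (by simp)
        have hm₂ : q.2 < n q.1 := hw q (by simp)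
        obtain ⟨m', l', hm', hl', heq⟩ := kgraph_swap_exists n hn hxy hm₁ hm₂
        refine ⟨(q.1, m') :: (p.1, l') :: t, ?_, by simp [h1, h2, h3], Relation.EqvGen.rel _ _
          ⟨[], t, p.1, q.1, p.2, q.2, m', l', hxy, hm₁, hm₂, hm', hl', heq, rfl, rfl⟩⟩
        intro r hr
        rcases List.mem_cons.mp hr with h | h
        · simpa [h] using hm'
        · rcases List.mem_cons.mp h with h | h
          · simpa [h] using hl'
          · exact hw r (by simp [h])
  | trans h1 h2 ih1 ih2 =>
    intro w hw hc
    obtain ⟨w₂, hw₂v, hw₂c, hw₂e⟩ := ih2 w hw hc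
    obtain ⟨w₁, hw₁v, hw₁c, hw₁e⟩ := ih1 w₂ hw₂v hw₂c
    exact ⟨w₁, hw₁v, hw₁c, hw₂e.trans _ _ _ hw₁e⟩

theorem kgraph_phi0_well_defined_injective (k : ℕ) (hk : 1 < k) (n : Fin k → ℕ)
    (hn : ∀ i, 2 ≤ n i) :
    (∀ w w' : List (Fin k × ℕ), Relation.EqvGen (kgraphStep n) w w' →
        kgraphPhi0 n w = kgraphPhi0 n w') ∧
    (∀ w w' : List (Fin k × ℕ), kgraphValid n w → kgraphValid n w' →
        (∀ i : Fin k, (w.map Prod.fst).count i = (w'.map Prod.fst).count i) →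
        kgraphPhi0 n w = kgraphPhi0 n w' →
        Relation.EqvGen (kgraphStep n) w w') := by
  constructor
  · intro w w' h
    exact kgraphEqv_phi0 n hn h
  · intro w w' hw hw' hcount hphi
    have hperm : (w'.map Prod.fst).Perm (w.map Prod.fst) :=
      (List.perm_iff_count).mpr (fun a => (hcount a).symm)
    obtain ⟨w'', hw''v, hw''c, hw''e⟩ := kgraph_rearrange n hn hperm w hw rfl
    have hphi'' : kgraphPhi0 n w'' = kgraphPhi0 n w' := by
      rw [← kgraphEqv_phi0 n hn hw''e, hphi]
    have : w'' = w' := kgraph_eq_of_same_colors n hn w'' w' hw''v hw' hw''c hphi''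
    exact this ▸ hw''e
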